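/- For the Morava K-theory logarithm l(t) = Σ_{k≥0} 2^{-k} v^{(2^{nk}-1)/(2^n-1)} t^{2^{nk}}, the coefficient of t^{i+1} in l(t), multiplied by (i+1), equals 2^{(n-1)k} v^{(2^{nk}-1)/(2^n-1)} if i = 2^{nk} − 1 for some k ≥ 0, and 0 otherwise. In particular, for n ≥ 2 and i > 0, this quantity is congruent to 0 modulo 2. -/

import Mathlib

open Polynomial

/-- The coefficient of `t^j` in the Morava K-theory logarithm
`l(t) = Σ_{k≥0} 2^{-k} v^{(2^{nk}-1)/(2^n-1)} t^{2^{nk}}`, as a polynomial in `v = X` over `ℚ`. -/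
noncomputable def moravaLogCoeff (n j : ℕ) : Polynomial ℚ :=
  ∑ m ∈ Finset.range (j + 1),
    if j = 2 ^ (n * m) then Polynomial.C ((1 : ℚ) / 2 ^ m) *
      Polynomial.X ^ ((2 ^ (n * m) - 1) / (2 ^ n - 1)) else 0

lemma morava_pow_inj {n : ℕ} (hn : 1 ≤ n) {a b : ℕ} (h : 2 ^ (n * a) = 2 ^ (n * b)) : a = b := by
  have := Nat.pow_right_injective (le_refl 2) h
  exact Nat.eq_of_mul_eq_mul_left hn this

lemma moravaLogCoeff_pow (n k : ℕ) (hn : 1 ≤ n) :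
    moravaLogCoeff n (2 ^ (n * k)) =
      Polynomial.C ((1 : ℚ) / 2 ^ k) * Polynomial.X ^ ((2 ^ (n * k) - 1) / (2 ^ n - 1)) := by
  unfold moravaLogCoeff
  have hk : k < 2 ^ (n * k) + 1 := by
    have h1 : k < 2 ^ k := Nat.lt_two_pow_self (n := k)
    have h2 : 2 ^ k ≤ 2 ^ (n * k) :=
      Nat.pow_le_pow_right (by norm_num) (Nat.le_mul_of_pos_left k hn)
    omega
  rw [Finset.sum_eq_single_of_mem k (Finset.mem_range.2 hk)]
  · simp
  · intro m _ hne
    rw [if_neg]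
    intro h
    exact hne (morava_pow_inj hn h).symm

lemma moravaLogCoeff_ne (n j : ℕ) (h : ∀ m : ℕ, j ≠ 2 ^ (n * m)) :
    moravaLogCoeff n j = 0 := by
  unfold moravaLogCoeff
  refine Finset.sum_eq_zero fun m _ => if_neg (h m)

/-- `(i+1)` times the coefficient of `t^{i+1}` in the Morava logarithm (which is the class
`[ℙ^i]` in Morava K-theory) equals `2^{(n-1)k} v^{(2^{nk}-1)/(2^n-1)}` if `i = 2^{nk} - 1`
for some `k`, and `0` otherwise; in particular, for `n ≥ 2` and `i > 0` it is congruent to `0`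
modulo `2`, i.e. it is twice an integral polynomial. -/
theorem morava_projective_space_classes (n : ℕ) (hn : 1 ≤ n) :
    (∀ i k : ℕ, i = 2 ^ (n * k) - 1 →
      ((i : Polynomial ℚ) + 1) * moravaLogCoeff n (i + 1) =
        Polynomial.C ((2 : ℚ) ^ ((n - 1) * k)) *
          Polynomial.X ^ ((2 ^ (n * k) - 1) / (2 ^ n - 1))) ∧
    (∀ i : ℕ, (∀ k : ℕ, i ≠ 2 ^ (n * k) - 1) →
      ((i : Polynomial ℚ) + 1) * moravaLogCoeff n (i + 1) = 0) ∧
    (2 ≤ n → ∀ i : ℕ, 0 < i →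
      ∃ q : Polynomial ℤ,
        ((i : Polynomial ℚ) + 1) * moravaLogCoeff n (i + 1) =
          Polynomial.map (Int.castRingHom ℚ) (2 * q)) := by
  have key : ∀ i k : ℕ, i = 2 ^ (n * k) - 1 →
      ((i : Polynomial ℚ) + 1) * moravaLogCoeff n (i + 1) =
        Polynomial.C ((2 : ℚ) ^ ((n - 1) * k)) *
          Polynomial.X ^ ((2 ^ (n * k) - 1) / (2 ^ n - 1)) := by
    intro i k hi
    have h1 : 1 ≤ 2 ^ (n * k) := Nat.one_le_two_pow
    have hi1 : i + 1 = 2 ^ (n * k) := by omega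
    have hcast : ((i : Polynomial ℚ) + 1) = ((i + 1 : ℕ) : Polynomial ℚ) := by push_cast; ring
    rw [hcast, hi1, moravaLogCoeff_pow n k hn]
    have hk : k ≤ n * k := Nat.le_mul_of_pos_left k hn
    have hexp : (n - 1) * k + k = n * k := by
      rw [Nat.sub_mul, one_mul, Nat.sub_add_cancel hk]
    have hcoeff : ((2 ^ (n * k) : ℕ) : ℚ) * ((1 : ℚ) / 2 ^ k) = (2 : ℚ) ^ ((n - 1) * k) := by
      push_cast
      rw [← hexp, pow_add]
      field_simp
    calc ((2 ^ (n * k) : ℕ) : Polynomial ℚ) *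
          (Polynomial.C ((1 : ℚ) / 2 ^ k) * Polynomial.X ^ ((2 ^ (n * k) - 1) / (2 ^ n - 1)))
        = Polynomial.C (((2 ^ (n * k) : ℕ) : ℚ) * ((1 : ℚ) / 2 ^ k)) *
            Polynomial.X ^ ((2 ^ (n * k) - 1) / (2 ^ n - 1)) := by
          rw [← Polynomial.C_eq_natCast, ← mul_assoc, ← Polynomial.C_mul]
      _ = Polynomial.C ((2 : ℚ) ^ ((n - 1) * k)) *
            Polynomial.X ^ ((2 ^ (n * k) - 1) / (2 ^ n - 1)) := by rw [hcoeff]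
  have zero : ∀ i : ℕ, (∀ k : ℕ, i ≠ 2 ^ (n * k) - 1) →
      ((i : Polynomial ℚ) + 1) * moravaLogCoeff n (i + 1) = 0 := by
    intro i hi
    rw [moravaLogCoeff_ne n (i + 1) (fun m h => by
      have h1 : 1 ≤ 2 ^ (n * m) := Nat.one_le_two_pow
      exact hi m (by omega)), mul_zero]
  refine ⟨key, zero, ?_⟩
  intro hn2 i hipos
  by_cases h : ∃ k : ℕ, i = 2 ^ (n * k) - 1
  · obtain ⟨k, hk⟩ := h
    have hkpos : 1 ≤ k := by
      by_contra hk0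
      have : k = 0 := by omega
      subst this
      simp at hk
      omega
    have hexp : 1 ≤ (n - 1) * k := Nat.one_le_iff_ne_zero.2 (by
      have : 1 ≤ n - 1 := by omega
      positivity)
    refine ⟨Polynomial.C ((2 : ℤ) ^ ((n - 1) * k - 1)) *
      Polynomial.X ^ ((2 ^ (n * k) - 1) / (2 ^ n - 1)), ?_⟩
    rw [key i k hk]
    rw [Polynomial.map_mul, Polynomial.map_mul, Polynomial.map_pow, Polynomial.map_C,
      Polynomial.map_X]
    have : (2 : ℚ) ^ ((n - 1) * k) = 2 * (2 : ℚ) ^ ((n - 1) * k - 1) := by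
      rw [← pow_succ']
      congr 1
      omega
    rw [this]
    simp [map_ofNat]
    ring
  · push_neg at h
    exact ⟨0, by rw [zero i h]; simp⟩
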